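/- Let A be a compact self-adjoint operator on a separable Hilbert space H with orthonormal eigenbasis {vₛ} and eigenvalues {μₛ}. Suppose u ∈ H with ‖u‖ = 1 satisfies ‖A u − μ u‖ = α for some α > 0, and let d > α. Let T_d be the closed span of the eigenvectors whose eigenvalues lie in [μ − d, μ + d]. Then there exists u₀ ∈ T_d with ‖u − u₀‖ < 2α/d. -/

import Mathlib

open Filter Topology

set_option maxHeartbeats 1000000 in
/-- Lemma 13 of Vishik–Lyusternik type: let `A` be a compact
self-adjoint operator on a separable Hilbert space with orthonormal eigenbasis `v s`
and eigenvalues `μs s`. If `u` is a unit vector with `‖A u - μ • u‖ = α > 0` and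
`d > α`, then there is `u₀` in the closed span `T_d` of the eigenvectors whose
eigenvalues lie in `[μ - d, μ + d]` with `‖u - u₀‖ < 2α/d`. -/
theorem stmt_1
    {H : Type*} [NormedAddCommGroup H] [InnerProductSpace ℝ H] [CompleteSpace H]
    [TopologicalSpace.SeparableSpace H]
    (A : H →L[ℝ] H) (hA : IsSelfAdjoint A) (hAc : IsCompactOperator A)
    (v : ℕ → H) (μs : ℕ → ℝ)
    (hon : Orthonormal ℝ v)
    (hbasis : (Submodule.span ℝ (Set.range v)).topologicalClosure = ⊤)
    (heig : ∀ s, A (v s) = μs s • v s)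
    (μ α d : ℝ) (u : H) (hu : ‖u‖ = 1)
    (hα : ‖A u - μ • u‖ = α) (hα0 : 0 < α) (hd : α < d) :
    ∃ u₀ ∈ (Submodule.span ℝ
        {x : H | ∃ s, μs s ∈ Set.Icc (μ - d) (μ + d) ∧ x = v s}).topologicalClosure,
      ‖u - u₀‖ < 2 * α / d := by
  classical
  have hd0 : (0:ℝ) < d := hα0.trans hd
  set K := (Submodule.span ℝ
      {x : H | ∃ s, μs s ∈ Set.Icc (μ - d) (μ + d) ∧ x = v s}).topologicalClosure with hKdef
  let b : HilbertBasis ℕ ℝ H := HilbertBasis.mk hon (le_of_eq hbasis.symm)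
  have hb : ⇑b = v := HilbertBasis.coe_mk _ _
  have hbs : ∀ s, b s = v s := fun s => congrFun hb s
  set c : lp (fun _ : ℕ => ℝ) 2 := b.repr u with hc
  have hrepr : ∀ (x : H) (s : ℕ), b.repr x s = inner ℝ (v s) x := by
    intro x s; rw [b.repr_apply_apply, hbs]
  set f : lp (fun _ : ℕ => ℝ) 2 := b.repr (A u - μ • u) with hf
  have hfs : ∀ s, f s = (μs s - μ) * c s := by
    intro s
    have h1 : (inner ℝ (v s) (A u) : ℝ) = μs s * inner ℝ (v s) u := by
      have h2 := hA.isSymmetric (v s) u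
      simp only [ContinuousLinearMap.coe_coe] at h2
      rw [← h2, heig s, real_inner_smul_left]
    have h3 : f s = b.repr (A u) s - μ * b.repr u s := by
      rw [hf, map_sub, map_smul, lp.coeFn_sub, Pi.sub_apply, lp.coeFn_smul, Pi.smul_apply,
        smul_eq_mul]
    rw [h3, hrepr (A u) s, hrepr u s, h1]
    ring
  -- the truncated coefficient function
  set g : ℕ → ℝ := fun s => if μs s ∈ Set.Icc (μ - d) (μ + d) then c s else 0 with hg
  have hgs : ∀ s, g s = if μs s ∈ Set.Icc (μ - d) (μ + d) then c s else 0 := fun _ => rfl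
  have htwo : (0:ℝ) < (2 : ENNReal).toReal := by norm_num
  have hcsum : Summable (fun s => ‖c s‖ ^ (2 : ENNReal).toReal) :=
    (lp.memℓp c).summable htwo
  have hgmem : Memℓp g 2 := by
    apply memℓp_gen
    refine Summable.of_nonneg_of_le (fun s => by positivity) (fun s => ?_) hcsum
    refine Real.rpow_le_rpow (norm_nonneg _) ?_ htwo.le
    rw [hgs s]
    by_cases h : μs s ∈ Set.Icc (μ - d) (μ + d)
    · rw [if_pos h]
    · rw [if_neg h]; simp
  set gl : lp (fun _ : ℕ => ℝ) 2 := ⟨g, hgmem⟩ with hgl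
  have hgls : ∀ s, gl s = g s := fun _ => rfl
  set u₀ : H := b.repr.symm gl with hu₀
  have hsum : HasSum (fun s => g s • v s) u₀ := by
    have h0 := b.hasSum_repr_symm gl
    rw [show (fun s => gl s • b s) = fun s => g s • v s from
      funext fun s => by rw [hbs s, hgls s]] at h0
    exact h0
  have hmemK : u₀ ∈ K := by
    have hcl : IsClosed (K : Set H) := Submodule.isClosed_topologicalClosure _
    refine hcl.mem_of_tendsto hsum (Filter.Eventually.of_forall fun F => ?_)
    refine Submodule.sum_mem _ fun s _ => ?_
    by_cases h : μs s ∈ Set.Icc (μ - d) (μ + d)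
    · refine Submodule.smul_mem _ _ ?_
      exact Submodule.le_topologicalClosure _ (Submodule.subset_span ⟨s, h, rfl⟩)
    · have h0 : g s = 0 := by rw [hgs s, if_neg h]
      simp [h0]
  refine ⟨u₀, hmemK, ?_⟩
  -- Now the norm estimate
  set e : lp (fun _ : ℕ => ℝ) 2 := c - gl with he
  have hes : ∀ s, e s = if μs s ∈ Set.Icc (μ - d) (μ + d) then 0 else c s := by
    intro s
    have h1 : e s = c s - gl s := by rw [he, lp.coeFn_sub, Pi.sub_apply]
    rw [h1, hgls s, hgs s]
    by_cases h : μs s ∈ Set.Icc (μ - d) (μ + d)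
    · rw [if_pos h, if_pos h, sub_self]
    · rw [if_neg h, if_neg h, sub_zero]
  have hnorm_e : ‖u - u₀‖ = ‖e‖ := by
    rw [← b.repr.norm_map (u - u₀), map_sub, hu₀, b.repr.apply_symm_apply, he]
  have hesum : Summable (fun s => ‖e s‖ ^ (2 : ENNReal).toReal) := (lp.memℓp e).summable htwo
  have hfsum : Summable (fun s => ‖f s‖ ^ (2 : ENNReal).toReal) := (lp.memℓp f).summable htwo
  have h2n : (2 : ENNReal).toReal = (2:ℕ) := by norm_num
  have hterm : ∀ s, d ^ (2 : ENNReal).toReal * ‖e s‖ ^ (2 : ENNReal).toReal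
      ≤ ‖f s‖ ^ (2 : ENNReal).toReal := by
    intro s
    rw [h2n]
    simp only [Real.rpow_natCast]
    by_cases h : μs s ∈ Set.Icc (μ - d) (μ + d)
    · rw [hes s, if_pos h, norm_zero]
      nlinarith [sq_nonneg ‖f s‖]
    · have hgt : d < |μs s - μ| := by
        rw [Set.mem_Icc, not_and_or] at h
        rcases h with h' | h'
        · push_neg at h'
          rw [abs_sub_comm]
          calc d < μ - μs s := by linarith
          _ ≤ |μ - μs s| := le_abs_self _
        · push_neg at h'
          calc d < μs s - μ := by linarith
          _ ≤ |μs s - μ| := le_abs_self _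
      rw [hes s, if_neg h, hfs s]
      have h1 : d * ‖c s‖ ≤ ‖(μs s - μ) * c s‖ := by
        rw [norm_mul, Real.norm_eq_abs (μs s - μ)]
        exact mul_le_mul_of_nonneg_right hgt.le (norm_nonneg _)
      nlinarith [norm_nonneg (c s), norm_nonneg ((μs s - μ) * c s),
        mul_nonneg hd0.le (norm_nonneg (c s))]
  have hkey : d ^ (2 : ENNReal).toReal * ‖e‖ ^ (2 : ENNReal).toReal
      ≤ α ^ (2 : ENNReal).toReal := by
    have h1 : ‖e‖ ^ (2 : ENNReal).toReal = ∑' s, ‖e s‖ ^ (2 : ENNReal).toReal :=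
      lp.norm_rpow_eq_tsum htwo e
    have h2 : ‖f‖ ^ (2 : ENNReal).toReal = ∑' s, ‖f s‖ ^ (2 : ENNReal).toReal :=
      lp.norm_rpow_eq_tsum htwo f
    have hfn : ‖f‖ = α := by rw [hf, b.repr.norm_map, hα]
    rw [h1, ← hfn, h2, ← tsum_mul_left]
    exact Summable.tsum_le_tsum hterm (hesum.mul_left _) hfsum
  rw [h2n] at hkey
  simp only [Real.rpow_natCast] at hkey
  have hle : ‖u - u₀‖ ≤ α / d := by
    rw [hnorm_e]
    have h4 : d * ‖e‖ ≤ α := by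
      nlinarith [hkey, norm_nonneg e, hα0.le, mul_nonneg hd0.le (norm_nonneg e)]
    rw [le_div_iff₀ hd0]
    linarith [h4]
  calc ‖u - u₀‖ ≤ α / d := hle
  _ < 2 * α / d := by rw [div_lt_div_iff₀ hd0 hd0]; nlinarith
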